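/- Let G be a finite simple connected graph. If H and H' are finite simple graphs with the same order, n(H) = n(H'), then ξ(G⊙H) = ξ(G⊙H'). -/

import Mathlib

universe u v

variable {V : Type u} {W : Type v}

/-- A distance-equalizer set of a graph: for every pair of distinct vertices outside `S`
there is a vertex of `S` equidistant to both. -/
def IsDistEqSet {α : Type*} (G : SimpleGraph α) (S : Set α) : Prop :=
  ∀ ⦃x y : α⦄, x ∉ S → y ∉ S → x ≠ y → ∃ w ∈ S, G.dist w x = G.dist w y

/-- The equidistant dimension of a graph: the minimum cardinality of a distance-equalizer set. -/
noncomputable def eqdim {α : Type*} (G : SimpleGraph α) : ℕ :=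
  sInf {n | ∃ S : Set α, IsDistEqSet G S ∧ S.ncard = n}

/-- The bisector of two vertices: vertices equidistant to both. -/
def bisector {α : Type*} (G : SimpleGraph α) (x y : α) : Set α :=
  {w | G.dist w x = G.dist w y}

/-- The empty bisector graph of `G`: two distinct vertices are adjacent iff their bisector
in `G` is empty. -/
def emptyBisector {α : Type*} (G : SimpleGraph α) : SimpleGraph α where
  Adj x y := x ≠ y ∧ bisector G x y = ∅
  symm := ⟨by
    rintro x y ⟨h1, h2⟩
    refine ⟨h1.symm, Set.eq_empty_iff_forall_notMem.mpr fun w hw => ?_⟩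
    exact Set.eq_empty_iff_forall_notMem.mp h2 w
      ((show G.dist w y = G.dist w x from hw).symm)⟩
  loopless := ⟨fun _ h => h.1 rfl⟩

/-- A vertex cover of a graph: a set of vertices meeting every edge. -/
def IsVertexCover {α : Type*} (G : SimpleGraph α) (C : Set α) : Prop :=
  ∀ ⦃x y : α⦄, G.Adj x y → x ∈ C ∨ y ∈ C

/-- An independent set of a graph: a set of pairwise non-adjacent vertices. -/
def IsIndepSet {α : Type*} (G : SimpleGraph α) (A : Set α) : Prop :=
  ∀ ⦃x y : α⦄, x ∈ A → y ∈ A → ¬ G.Adj x y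

/-- The vertex cover number `β(G)`. -/
noncomputable def vcNum {α : Type*} (G : SimpleGraph α) : ℕ :=
  sInf {n | ∃ C : Set α, IsVertexCover G C ∧ C.ncard = n}

/-- The independence number `α(G)`. -/
noncomputable def indepNum {α : Type*} (G : SimpleGraph α) : ℕ :=
  sSup {n | ∃ A : Set α, IsIndepSet G A ∧ A.ncard = n}

/-- A forward-equalized pair `(X, Y)` of `G`: `X ∪ Y = V(G)` and for every
`a ∈ X \ Y` and `b ∈ Y \ X` there is `w` with `d(w,a) = d(w,b) + 1`. -/
def IsForwardEqualizedPair {α : Type*} (G : SimpleGraph α) (X Y : Set α) : Prop :=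
  X ∪ Y = Set.univ ∧
  ∀ ⦃a⦄, a ∈ X \ Y → ∀ ⦃b⦄, b ∈ Y \ X → ∃ w, G.dist w a = G.dist w b + 1

/-- `β*(G)`: the minimum of `|X ∩ Y|` over all pairs of vertex covers `X, Y` of the
empty bisector graph of `G` such that `(X, Y)` is a forward-equalized pair of `G`. -/
noncomputable def betaStar {α : Type*} (G : SimpleGraph α) : ℕ :=
  sInf {n | ∃ X Y : Set α,
    IsVertexCover (emptyBisector G) X ∧ IsVertexCover (emptyBisector G) Y ∧
    IsForwardEqualizedPair G X Y ∧ (X ∩ Y).ncard = n}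

/-- The corona product `G ⊙ H`: one copy of `H` for each vertex `i` of `G` (the vertices
`Sum.inr (i, w)`), with `i` joined to every vertex of its copy. -/
def corona (G : SimpleGraph V) (H : SimpleGraph W) : SimpleGraph (V ⊕ V × W) where
  Adj x y :=
    match x, y with
    | Sum.inl a, Sum.inl b => G.Adj a b
    | Sum.inl a, Sum.inr p => a = p.1
    | Sum.inr p, Sum.inl a => a = p.1
    | Sum.inr p, Sum.inr q => p.1 = q.1 ∧ H.Adj p.2 q.2
  symm := ⟨by
    rintro (a | p) (b | q) h
    · exact h.symm
    · exact h
    · exact h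
    · exact ⟨h.1.symm, h.2.symm⟩⟩
  loopless := ⟨by
    rintro (a | p) h
    · exact G.irrefl h
    · exact H.irrefl h.2⟩

section DistAux

open Sum SimpleGraph

variable {G : SimpleGraph V} {K : SimpleGraph W}

def coronaProj : V ⊕ V × W → V := fun x => match x with
  | Sum.inl a => a
  | Sum.inr p => p.1

@[simp] lemma coronaProj_inl (a : V) : coronaProj (inl a : V ⊕ V × W) = a := rfl
@[simp] lemma coronaProj_inr (p : V × W) : coronaProj (inr p : V ⊕ V × W) = p.1 := rfl

def coronaInl (G : SimpleGraph V) (K : SimpleGraph W) : G →g corona G K :=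
  ⟨Sum.inl, fun h => h⟩

@[simp] lemma coronaInl_apply (a : V) : coronaInl G K a = inl a := rfl

lemma corona_adj_proj {x y : V ⊕ V × W} (h : (corona G K).Adj x y) :
    coronaProj x = coronaProj y ∨ G.Adj (coronaProj x) (coronaProj y) := by
  rcases x with a | p <;> rcases y with b | q
  · exact Or.inr h
  · exact Or.inl h
  · exact Or.inl (Eq.symm h)
  · exact Or.inl h.1

lemma corona_adj_inr {p : V × W} {z : V ⊕ V × W} (h : (corona G K).Adj (inr p) z) :
    coronaProj z = p.1 := by
  rcases z with b | q
  · exact h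
  · exact Eq.symm h.1

lemma corona_dist_proj_le (hG : G.Connected) {x y : V ⊕ V × W}
    (p : (corona G K).Walk x y) : G.dist (coronaProj x) (coronaProj y) ≤ p.length := by
  induction p with
  | nil => simp [SimpleGraph.dist_self]
  | @cons a b c h q ih =>
    rcases corona_adj_proj h with he | ha
    · rw [he]; exact ih.trans (by simp)
    · calc G.dist (coronaProj a) (coronaProj c)
          ≤ G.dist (coronaProj a) (coronaProj b) + G.dist (coronaProj b) (coronaProj c) :=
            hG.dist_triangle
        _ ≤ 1 + q.length :=
            add_le_add (SimpleGraph.dist_eq_one_iff_adj.mpr ha).le ih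
        _ ≤ (SimpleGraph.Walk.cons h q).length := by
            rw [SimpleGraph.Walk.length_cons]; omega

lemma corona_walk_from_inr (hG : G.Connected) {x y : V ⊕ V × W}
    (p : (corona G K).Walk x y) :
    ∀ (j : V) (w : W), x = inr (j, w) → coronaProj y ≠ j →
      G.dist j (coronaProj y) + 1 ≤ p.length := by
  cases p with
  | nil =>
    intro j w hx hy
    rw [hx] at hy
    simp at hy
  | @cons a b c h q =>
    intro j w hx hy
    subst hx
    have hz : coronaProj b = j := corona_adj_inr h
    have hq := corona_dist_proj_le (K := K) hG q
    rw [hz] at hq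
    rw [SimpleGraph.Walk.length_cons]
    omega

lemma corona_walk_to_inr (hG : G.Connected) {x : V ⊕ V × W} {j : V} {w : W}
    (p : (corona G K).Walk x (inr (j, w))) (hx : coronaProj x ≠ j) :
    G.dist (coronaProj x) j + 1 ≤ p.length := by
  have := corona_walk_from_inr hG p.reverse j w rfl hx
  rw [SimpleGraph.Walk.length_reverse] at this
  rw [SimpleGraph.dist_comm]
  exact this

lemma corona_walk_inr_inr (hG : G.Connected) {x y : V ⊕ V × W}
    (p : (corona G K).Walk x y) :
    ∀ (i : V) (w : W) (j : V) (w' : W), x = inr (i, w) → y = inr (j, w') → i ≠ j →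
      G.dist i j + 2 ≤ p.length := by
  cases p with
  | nil =>
    intro i w j w' hx hy hij
    rw [hx] at hy
    injection hy with h
    exact absurd (congrArg Prod.fst h) hij
  | @cons a b c h q =>
    intro i w j w' hx hy hij
    subst hx; subst hy
    have hz : coronaProj b = i := corona_adj_inr h
    have hq := corona_walk_to_inr (K := K) hG q (by rw [hz]; exact hij)
    rw [hz] at hq
    rw [SimpleGraph.Walk.length_cons]
    omega

lemma corona_reachable_inl {x : V ⊕ V × W} :
    (corona G K).Reachable x (inl (coronaProj x)) := by
  rcases x with a | p
  · exact SimpleGraph.Reachable.refl _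
  · exact SimpleGraph.Adj.reachable (show (corona G K).Adj (inr p) (inl p.1) from rfl)

lemma corona_connected (hG : G.Connected) : (corona G K).Connected := by
  have : Nonempty V := hG.nonempty
  have hne : Nonempty (V ⊕ V × W) := ⟨inl (Classical.arbitrary V)⟩
  refine SimpleGraph.Connected.mk fun x y => ?_
  exact corona_reachable_inl.trans
    (((hG.preconnected (coronaProj x) (coronaProj y)).map (coronaInl G K)).trans
      corona_reachable_inl.symm)

lemma corona_dist_inl_inl (hG : G.Connected) (i j : V) :
    (corona G K).dist (inl i) (inl j) = G.dist i j := by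
  apply le_antisymm
  · obtain ⟨q, hq⟩ := hG.exists_walk_length_eq_dist i j
    have := SimpleGraph.dist_le (q.map (coronaInl G K))
    rw [SimpleGraph.Walk.length_map] at this
    simpa [hq] using this
  · obtain ⟨p, hp⟩ := (corona_connected (K := K) hG).exists_walk_length_eq_dist
      (inl i) (inl j)
    have := corona_dist_proj_le hG p
    simpa [hp] using this

lemma corona_dist_inl_inr (hG : G.Connected) (i j : V) (w : W) :
    (corona G K).dist (inl i) (inr (j, w)) = G.dist i j + 1 := by
  rcases eq_or_ne i j with rfl | hij
  · rw [SimpleGraph.dist_self]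
    exact SimpleGraph.dist_eq_one_iff_adj.mpr (show (corona G K).Adj _ _ from rfl)
  · apply le_antisymm
    · obtain ⟨q, hq⟩ := hG.exists_walk_length_eq_dist i j
      have := SimpleGraph.dist_le
        ((q.map (coronaInl G K)).concat (show (corona G K).Adj (inl j) (inr (j, w)) from rfl))
      erw [SimpleGraph.Walk.length_concat, SimpleGraph.Walk.length_map] at this
      simpa [SimpleGraph.Walk.length_concat, hq] using this
    · obtain ⟨p, hp⟩ := (corona_connected (K := K) hG).exists_walk_length_eq_dist
        (inl i) (inr (j, w))
      have := corona_walk_to_inr hG p (by simpa using hij)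
      simpa [hp] using this

lemma corona_dist_inr_inl (hG : G.Connected) (k : V) (u : W) (i : V) :
    (corona G K).dist (inr (k, u)) (inl i) = G.dist k i + 1 := by
  rw [SimpleGraph.dist_comm, corona_dist_inl_inr hG, SimpleGraph.dist_comm]

lemma corona_dist_inr_inr (hG : G.Connected) {i j : V} (hij : i ≠ j) (w w' : W) :
    (corona G K).dist (inr (i, w)) (inr (j, w')) = G.dist i j + 2 := by
  apply le_antisymm
  · obtain ⟨q, hq⟩ := hG.exists_walk_length_eq_dist i j
    have := SimpleGraph.dist_le
      (SimpleGraph.Walk.cons (show (corona G K).Adj (inr (i, w)) (inl i) from rfl)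
        ((q.map (coronaInl G K)).concat
          (show (corona G K).Adj (inl j) (inr (j, w')) from rfl)))
    erw [SimpleGraph.Walk.length_cons, SimpleGraph.Walk.length_concat,
      SimpleGraph.Walk.length_map, hq] at this
    omega
  · obtain ⟨p, hp⟩ := (corona_connected (K := K) hG).exists_walk_length_eq_dist
      (inr (i, w)) (inr (j, w'))
    have := corona_walk_inr_inr hG p i w j w' rfl rfl hij
    omega

lemma corona_dist_same_le (i : V) (w w' : W) :
    (corona G K).dist (inr (i, w)) (inr (i, w')) ≤ 2 := by
  have := SimpleGraph.dist_le
    (SimpleGraph.Walk.cons (show (corona G K).Adj (inr (i, w)) (inl i) from rfl)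
      (SimpleGraph.Walk.cons (show (corona G K).Adj (inl i) (inr (i, w')) from rfl)
        SimpleGraph.Walk.nil))
  simpa using this

end DistAux

section Transfer

open Sum SimpleGraph

lemma corona_transfer {W W' : Type v} [Fintype V] [Fintype W] [Fintype W']
    [Nonempty W] [Nonempty W'] {G : SimpleGraph V} (hG : G.Connected)
    (H : SimpleGraph W) (H' : SimpleGraph W') (e : W ≃ W')
    (S : Set (V ⊕ V × W)) (hS : IsDistEqSet (corona G H) S) :
    ∃ S' : Set (V ⊕ V × W'), IsDistEqSet (corona G H') S' ∧ S'.ncard ≤ S.ncard := by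
  classical
  let A : Set V := {i | inl i ∈ S}
  let Si : V → Set W := fun i => {w | inr (i, w) ∈ S}
  have hAdef : ∀ i, i ∈ A ↔ inl i ∈ S := fun _ => Iff.rfl
  have hSidef : ∀ i w, w ∈ Si i ↔ inr (i, w) ∈ S := fun _ _ => Iff.rfl
  obtain ⟨w0'⟩ := ‹Nonempty W'›
  -- choice of a marked element in each nonempty Si
  have hchoice : ∀ i, ∃ w : W, (Si i).Nonempty → w ∈ Si i := by
    intro i
    by_cases h : (Si i).Nonempty
    · exact ⟨h.choose, fun _ => h.choose_spec⟩
    · exact ⟨Classical.arbitrary W, fun hh => absurd hh h⟩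
  choose u hu using hchoice
  -- every vertex without its inl in S has a leaf in S
  have h1 : ∀ i, i ∉ A → (Si i).Nonempty := by
    intro i hiA
    by_contra hne
    have hwS : inr (i, Classical.arbitrary W) ∉ S := fun h => hne ⟨_, h⟩
    obtain ⟨z, hz, hd⟩ := hS hiA hwS (by simp)
    obtain (k | ⟨k, xu⟩) := z
    · rw [corona_dist_inl_inl hG, corona_dist_inl_inr hG] at hd; omega
    · rcases eq_or_ne k i with rfl | hki
      · exact hne ⟨xu, hz⟩
      · rw [corona_dist_inr_inl hG, corona_dist_inr_inr hG hki] at hd; omega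
  -- the transferred set
  let S' : Set (V ⊕ V × W') := {x | match x with
    | Sum.inl i => i ∈ A ∨ Si i ≠ Set.univ
    | Sum.inr p => if p.1 ∈ A ∨ Si p.1 = Set.univ then p.2 ∈ e '' Si p.1
        else p.2 ∈ e '' (Si p.1 \ {u p.1})}
  have memInl : ∀ i : V, (inl i ∈ S') ↔ (i ∈ A ∨ Si i ≠ Set.univ) := fun _ => Iff.rfl
  have memInr : ∀ (i : V) (w' : W'), (inr (i, w') ∈ S') ↔
      (if i ∈ A ∨ Si i = Set.univ then w' ∈ e '' Si i else w' ∈ e '' (Si i \ {u i})) :=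
    fun _ _ => Iff.rfl
  have hS'ne : ∀ i w', inr (i, w') ∉ S' → Si i ≠ Set.univ := by
    intro i w' hns hcontra
    exact hns ((memInr i w').mpr (by
      rw [if_pos (Or.inr hcontra), hcontra]
      exact ⟨e.symm w', trivial, by simp⟩))
  have hAsub : ∀ k, k ∈ A → inl k ∈ S' := fun k hk => (memInl k).mpr (Or.inl hk)
  have hwit : ∀ k : V, (inl k ∈ S') ∨ (inr (k, w0') ∈ S') := by
    intro k
    by_cases hk : k ∈ A ∨ Si k ≠ Set.univ
    · exact Or.inl ((memInl k).mpr hk)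
    · push_neg at hk
      exact Or.inr ((memInr k w0').mpr (by
        rw [if_pos (Or.inr hk.2), hk.2]
        exact ⟨e.symm w0', trivial, by simp⟩))
  refine ⟨S', ?_, ?_⟩
  · -- IsDistEqSet
    have hB : ∀ (i j : V) (w' : W'), inl i ∉ S' → inr (j, w') ∉ S' →
        ∃ z ∈ S', (corona G H').dist z (inl i) = (corona G H').dist z (inr (j, w')) := by
      intro i j w' hx hy
      have hi : i ∉ A ∧ Si i = Set.univ := by
        by_contra h
        apply hx
        refine (memInl i).mpr ?_
        by_cases hA : i ∈ A
        · exact Or.inl hA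
        · exact Or.inr fun hU => h ⟨hA, hU⟩
      have hjne : Si j ≠ Set.univ := hS'ne j w' hy
      obtain ⟨w, hw⟩ := (Set.ne_univ_iff_exists_notMem _).mp hjne
      have hij : i ≠ j := fun h => hjne (h ▸ hi.2)
      have hwS : inr (j, w) ∉ S := hw
      obtain ⟨z, hz, hd⟩ := hS hi.1 hwS (by simp)
      obtain (k | ⟨k, xu⟩) := z
      · have hk : k ∈ A := hz
        rw [corona_dist_inl_inl hG, corona_dist_inl_inr hG] at hd
        exact ⟨inl k, hAsub k hk,
          by rw [corona_dist_inl_inl hG, corona_dist_inl_inr hG]; omega⟩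
      · rcases eq_or_ne k i with rfl | hki
        · rw [corona_dist_inr_inl hG, corona_dist_inr_inr hG hij] at hd
          rw [SimpleGraph.dist_self] at hd
          omega
        · rcases eq_or_ne k j with rfl | hkj
          · -- k = j : forces G.dist k i = 1
            have hub := corona_dist_same_le (G := G) (K := H) k xu w
            rw [corona_dist_inr_inl hG] at hd
            rw [← hd] at hub
            have hpos : 0 < G.dist k i := hG.pos_dist_of_ne (Ne.symm hij)
            have h1' : G.dist k i = 1 := by omega
            refine ⟨inl k, (memInl k).mpr (Or.inr hjne), ?_⟩
            rw [corona_dist_inl_inl hG, corona_dist_inl_inr hG, SimpleGraph.dist_self]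
            omega
          · rw [corona_dist_inr_inl hG, corona_dist_inr_inr hG hkj] at hd
            rcases hwit k with hk' | hk'
            · exact ⟨inl k, hk',
                by rw [corona_dist_inl_inl hG, corona_dist_inl_inr hG]; omega⟩
            · exact ⟨inr (k, w0'), hk',
                by rw [corona_dist_inr_inl hG, corona_dist_inr_inr hG hkj]; omega⟩
    have hA2 : ∀ (i j : V), inl i ∉ S' → inl j ∉ S' → i ≠ j →
        ∃ z ∈ S', (corona G H').dist z (inl i) = (corona G H').dist z (inl j) := by
      intro i j hx hy hij
      have hiA : i ∉ A := fun h => hx ((memInl i).mpr (Or.inl h))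
      have hjA : j ∉ A := fun h => hy ((memInl j).mpr (Or.inl h))
      obtain ⟨z, hz, hd⟩ := hS hiA hjA (by simpa using hij)
      obtain (k | ⟨k, xu⟩) := z
      · have hk : k ∈ A := hz
        rw [corona_dist_inl_inl hG, corona_dist_inl_inl hG] at hd
        exact ⟨inl k, hAsub k hk,
          by rw [corona_dist_inl_inl hG, corona_dist_inl_inl hG]; omega⟩
      · rw [corona_dist_inr_inl hG, corona_dist_inr_inl hG] at hd
        rcases hwit k with hk' | hk'
        · exact ⟨inl k, hk',
            by rw [corona_dist_inl_inl hG, corona_dist_inl_inl hG]; omega⟩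
        · exact ⟨inr (k, w0'), hk',
            by rw [corona_dist_inr_inl hG, corona_dist_inr_inl hG]; omega⟩
    have hC : ∀ (i j : V) (w₁' w₂' : W'), i ≠ j → inr (i, w₁') ∉ S' → inr (j, w₂') ∉ S' →
        ∃ z ∈ S',
          (corona G H').dist z (inr (i, w₁')) = (corona G H').dist z (inr (j, w₂')) := by
      intro i j w₁' w₂' hij hx hy
      have hine := hS'ne i w₁' hx
      have hjne := hS'ne j w₂' hy
      obtain ⟨w₁, hw₁⟩ := (Set.ne_univ_iff_exists_notMem _).mp hine
      obtain ⟨w₂, hw₂⟩ := (Set.ne_univ_iff_exists_notMem _).mp hjne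
      have hw₁S : inr (i, w₁) ∉ S := hw₁
      have hw₂S : inr (j, w₂) ∉ S := hw₂
      obtain ⟨z, hz, hd⟩ := hS hw₁S hw₂S (by simp [hij])
      obtain (k | ⟨k, xu⟩) := z
      · have hk : k ∈ A := hz
        rw [corona_dist_inl_inr hG, corona_dist_inl_inr hG] at hd
        exact ⟨inl k, hAsub k hk,
          by rw [corona_dist_inl_inr hG, corona_dist_inl_inr hG]; omega⟩
      · rcases eq_or_ne k i with rfl | hki
        · have hub := corona_dist_same_le (G := G) (K := H) k xu w₁
          rw [corona_dist_inr_inr hG hij] at hd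
          rw [hd] at hub
          have hpos : 0 < G.dist k j := hG.pos_dist_of_ne hij
          omega
        · rcases eq_or_ne k j with rfl | hkj
          · have hub := corona_dist_same_le (G := G) (K := H) k xu w₂
            rw [corona_dist_inr_inr hG hki] at hd
            rw [← hd] at hub
            have hpos : 0 < G.dist k i := hG.pos_dist_of_ne hki
            omega
          · rw [corona_dist_inr_inr hG hki, corona_dist_inr_inr hG hkj] at hd
            rcases hwit k with hk' | hk'
            · exact ⟨inl k, hk',
                by rw [corona_dist_inl_inr hG, corona_dist_inl_inr hG]; omega⟩
            · exact ⟨inr (k, w0'), hk',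
                by rw [corona_dist_inr_inr hG hki, corona_dist_inr_inr hG hkj]; omega⟩
    intro x y hx hy hxy
    rcases x with i | ⟨i, w₁'⟩ <;> rcases y with j | ⟨j, w₂'⟩
    · exact hA2 i j hx hy (by simpa using hxy)
    · exact hB i (j, w₂').1 (j, w₂').2 hx hy
    · obtain ⟨z, hz, hd⟩ := hB j (i, w₁').1 (i, w₁').2 hy hx
      exact ⟨z, hz, hd.symm⟩
    · rcases eq_or_ne i j with rfl | hij
      · have hw12 : w₁' ≠ w₂' := by
          intro h; exact hxy (by rw [h])
        have hiA' : inl i ∈ S' := (memInl i).mpr (Or.inr (hS'ne i w₂' hy))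
        exact ⟨inl i, hiA',
          by rw [corona_dist_inl_inr hG, corona_dist_inl_inr hG]⟩
      · exact hC i j w₁' w₂' hij hx hy
  · -- cardinality
    let f : V ⊕ V × W' → V ⊕ V × W := fun x => match x with
      | Sum.inl i => if i ∈ A then Sum.inl i else Sum.inr (i, u i)
      | Sum.inr p => Sum.inr (p.1, e.symm p.2)
    have hmaps : ∀ a ∈ S', f a ∈ S := by
      intro a ha
      obtain (i | ⟨i, w'⟩) := a
      · by_cases hiA : i ∈ A
        · show (if i ∈ A then (Sum.inl i : V ⊕ V × W) else Sum.inr (i, u i)) ∈ S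
          rw [if_pos hiA]; exact hiA
        · show (if i ∈ A then (Sum.inl i : V ⊕ V × W) else Sum.inr (i, u i)) ∈ S
          rw [if_neg hiA]
          exact hu i (h1 i hiA)
      · show (Sum.inr (i, e.symm w') : V ⊕ V × W) ∈ S
        have ha' := (memInr i w').mp ha
        by_cases hc : i ∈ A ∨ Si i = Set.univ
        · rw [if_pos hc] at ha'
          obtain ⟨w, hwm, hew⟩ := ha'
          have : e.symm w' = w := by rw [← hew]; simp
          rw [this]; exact hwm
        · rw [if_neg hc] at ha'
          obtain ⟨w, hwm, hew⟩ := ha'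
          have : e.symm w' = w := by rw [← hew]; simp
          rw [this]; exact hwm.1
    have hinj : Set.InjOn f S' := by
      intro a ha b hb hab
      obtain (i | ⟨i, w₁'⟩) := a <;> obtain (j | ⟨j, w₂'⟩) := b
      · by_cases hiA : i ∈ A <;> by_cases hjA : j ∈ A
        · simp only [f, if_pos hiA, if_pos hjA, Sum.inl.injEq] at hab
          rw [hab]
        · exact absurd ((by simp only [f, if_pos hiA, if_neg hjA] at hab; exact hab) :
            (Sum.inl i : V ⊕ V × W) = Sum.inr (j, u j)) (by simp)
        · exact absurd ((by simp only [f, if_neg hiA, if_pos hjA] at hab; exact hab) :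
            (Sum.inr (i, u i) : V ⊕ V × W) = Sum.inl j) (by simp)
        · simp only [f, if_neg hiA, if_neg hjA, Sum.inr.injEq, Prod.mk.injEq] at hab
          rw [hab.1]
      · by_cases hiA : i ∈ A
        · exact absurd ((by simp only [f, if_pos hiA] at hab; exact hab) :
            (Sum.inl i : V ⊕ V × W) = Sum.inr (j, e.symm w₂')) (by simp)
        · simp only [f, if_neg hiA, Sum.inr.injEq, Prod.mk.injEq] at hab
          obtain ⟨rfl, hui⟩ := hab
          have hine : Si i ≠ Set.univ := ((memInl i).mp ha).resolve_left hiA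
          have hb' := (memInr i w₂').mp hb
          rw [if_neg (by push_neg; exact ⟨hiA, hine⟩)] at hb'
          obtain ⟨w, ⟨hwm, hwne⟩, hew⟩ := hb'
          exfalso
          apply hwne
          have : e.symm w₂' = w := by rw [← hew]; simp
          simp only [Set.mem_singleton_iff]
          rw [← this, ← hui]
      · by_cases hjA : j ∈ A
        · exact absurd ((by simp only [f, if_pos hjA] at hab; exact hab) :
            (Sum.inr (i, e.symm w₁') : V ⊕ V × W) = Sum.inl j) (by simp)
        · simp only [f, if_neg hjA, Sum.inr.injEq, Prod.mk.injEq] at hab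
          obtain ⟨rfl, hui⟩ := hab
          have hine : Si i ≠ Set.univ := ((memInl i).mp hb).resolve_left hjA
          have ha' := (memInr i w₁').mp ha
          rw [if_neg (by push_neg; exact ⟨hjA, hine⟩)] at ha'
          obtain ⟨w, ⟨hwm, hwne⟩, hew⟩ := ha'
          exfalso
          apply hwne
          have : e.symm w₁' = w := by rw [← hew]; simp
          simp only [Set.mem_singleton_iff]
          rw [← this, hui]
      · simp only [f, Sum.inr.injEq, Prod.mk.injEq] at hab
        have h2 := e.symm.injective hab.2
        rw [hab.1, h2]
    exact Set.ncard_le_ncard_of_injOn f hmaps hinj S.toFinite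

end Transfer

section Main

open Sum

lemma eqdim_corona_le {W₁ W₂ : Type v} [Fintype V] [Fintype W₁] [Fintype W₂]
    [Nonempty W₁] [Nonempty W₂] {G : SimpleGraph V} (hG : G.Connected)
    (H₁ : SimpleGraph W₁) (H₂ : SimpleGraph W₂) (e : W₁ ≃ W₂) :
    eqdim (corona G H₂) ≤ eqdim (corona G H₁) := by
  have hne : ({n | ∃ S : Set (V ⊕ V × W₁), IsDistEqSet (corona G H₁) S ∧ S.ncard = n}).Nonempty :=
    ⟨(Set.univ : Set (V ⊕ V × W₁)).ncard, Set.univ,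
      fun x y hx _ _ => absurd (Set.mem_univ x) hx, rfl⟩
  obtain ⟨S, hSdes, hScard⟩ := Nat.sInf_mem hne
  obtain ⟨S', h1, h2⟩ := corona_transfer hG H₁ H₂ e S hSdes
  calc eqdim (corona G H₂) ≤ S'.ncard := Nat.sInf_le ⟨S', h1, rfl⟩
    _ ≤ S.ncard := h2
    _ = eqdim (corona G H₁) := hScard

end Main

/-- If `H` and `H'` have the same order, then
`ξ(G ⊙ H) = ξ(G ⊙ H')`. -/
theorem eqdim_corona_eq_of_card_eq {W' : Type v} [Fintype V] [Fintype W] [Fintype W']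
    [Nonempty W] [Nonempty W'] (G : SimpleGraph V) (hG : G.Connected)
    (H : SimpleGraph W) (H' : SimpleGraph W')
    (hcard : Fintype.card W = Fintype.card W') :
    eqdim (corona G H) = eqdim (corona G H') := by
  have e : W ≃ W' := Fintype.equivOfCardEq hcard
  exact le_antisymm (eqdim_corona_le hG H' H e.symm) (eqdim_corona_le hG H H' e)
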